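/- arXiv:2411.03118 — 3 statements merged into one kernel-verified Lean document; each statement's English description precedes it below -/
import Mathlib

section
/- For all integers n ≥ 1 and i with 1 ≤ i ≤ p^n, and every x ∈ L, one has ‖(binom(p^n, i)/p^n) · x^i − ((−1)^{i−1}/i) · x^i‖ ≤ p^{−n} · p^{i/(p−1)} · ‖x‖^i, where binom(p^n, i) denotes the binomial coefficient. (This is the term-by-term estimate the paper proves, via the identity binom(p^n,i)/p^n − (−1)^{i−1}/i = [(p^n−1)(p^n−2)⋯(p^n−i+1) − (−1)^{i−1}(i−1)!]/i!, the divisibility of the numerator by p^n, and the bound v_p(i!) ≤ i/(p−1).) -/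
/-- **Term-by-term estimate in the computation of the logarithm of `μ_{p^∞}`.**
Let `p` be a prime and `L` a complete nonarchimedean normed field equipped with a ring
homomorphism `ℚ_p → L` along which the norm restricts to the standard `p`-adic absolute value
(so `‖p‖ = p⁻¹` in `L`).  For all integers `n ≥ 1` and `1 ≤ i ≤ p^n` and every `x ∈ L`,
`‖(C(p^n, i)/p^n)·x^i − ((−1)^{i−1}/i)·x^i‖ ≤ p^{−n} · p^{i/(p−1)} · ‖x‖^i`,
where `C(p^n, i)` is the binomial coefficient. -/
theorem padic_log_term_estimate
    (p : ℕ) [Fact p.Prime] (L : Type*) [NormedField L] [CompleteSpace L]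
    [IsUltrametricDist L] (f : ℚ_[p] →+* L) (hf : ∀ q : ℚ_[p], ‖f q‖ = ‖q‖)
    (n i : ℕ) (hn : 1 ≤ n) (hi1 : 1 ≤ i) (hi2 : i ≤ p ^ n) (x : L) :
    ‖(((p ^ n).choose i : L) / (p : L) ^ n) * x ^ i - ((-1 : L) ^ (i - 1) / (i : L)) * x ^ i‖ ≤
      (p : ℝ) ^ (-(n : ℝ)) * (p : ℝ) ^ ((i : ℝ) / ((p : ℝ) - 1)) * ‖x‖ ^ i := by
  have hp := Fact.out (p := p.Prime)
  obtain ⟨k, rfl⟩ : ∃ k, i = k + 1 := ⟨i - 1, by omega⟩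
  have hppos : 0 < p ^ n := pow_pos hp.pos n
  set A : ℤ := ((p ^ n - 1).descFactorial k : ℤ) with hA
  set N : ℤ := A - (-1) ^ k * (Nat.factorial k : ℤ) with hN
  -- divisibility
  have hdvd : (p : ℤ) ^ n ∣ N := by
    suffices h : ((N : ZMod (p ^ n)) = 0) by
      have := (ZMod.intCast_zmod_eq_zero_iff_dvd N (p ^ n)).mp h
      exact_mod_cast this
    have : ((A : ZMod (p ^ n)) = (-1) ^ k * (Nat.factorial k : ℤ)) := by
      rw [hA]
      push_cast
      rw [Nat.descFactorial_eq_prod_range]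
      push_cast
      rw [← Finset.prod_range_add_one_eq_factorial]
      push_cast
      rw [show ((-1 : ZMod (p ^ n))) ^ k = ∏ _x ∈ Finset.range k, (-1 : ZMod (p ^ n)) by simp,
        ← Finset.prod_mul_distrib]
      refine Finset.prod_congr rfl fun j hj => ?_
      have hj' : j + 1 ≤ p ^ n := by
        have := Finset.mem_range.mp hj; omega
      have : (p ^ n - 1 - j : ℕ) = p ^ n - (j + 1) := by omega
      rw [this, Nat.cast_sub hj']
      have hz : ((p : ZMod (p ^ n))) ^ n = 0 := by
        rw [← Nat.cast_pow, ZMod.natCast_self]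
      push_cast
      rw [hz]
      ring
    rw [hN]
    push_cast
    rw [this]
    push_cast
    ring
  -- identity
  have hfact : (((k+1).factorial : ℕ) : ℚ_[p]) ≠ 0 := Nat.cast_ne_zero.mpr (Nat.factorial_ne_zero _)
  have hpn0 : ((p : ℚ_[p]) ^ n) ≠ 0 := by
    have : (p : ℚ_[p]) ≠ 0 := Nat.cast_ne_zero.mpr hp.ne_zero
    exact pow_ne_zero _ this
  have hk1 : ((k + 1 : ℕ) : ℚ_[p]) ≠ 0 := Nat.cast_ne_zero.mpr (Nat.succ_ne_zero k)
  have hnat : (k+1).factorial * (p ^ n).choose (k + 1) = p ^ n * (p ^ n - 1).descFactorial k := by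
    rw [← Nat.descFactorial_eq_factorial_mul_choose]
    conv_lhs => rw [show p ^ n = (p ^ n - 1) + 1 by omega]
    rw [Nat.succ_descFactorial_succ]
    congr 1
    omega
  set q : ℚ_[p] := ((p ^ n).choose (k + 1) : ℚ_[p]) / (p : ℚ_[p]) ^ n
      - (-1 : ℚ_[p]) ^ k / ((k + 1 : ℕ) : ℚ_[p]) with hq
  have key : q = (N : ℚ_[p]) / (((k+1).factorial : ℕ) : ℚ_[p]) := by
    have hcast : (((k+1).factorial : ℕ) : ℚ_[p]) * ((p ^ n).choose (k + 1) : ℕ) =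
        ((p : ℚ_[p]) ^ n) * ((p ^ n - 1).descFactorial k : ℕ) := by
      have := congrArg (fun m : ℕ => (m : ℚ_[p])) hnat
      push_cast at this
      exact this
    have hF : (((k+1).factorial : ℕ) : ℚ_[p]) = ((k : ℚ_[p]) + 1) * (k.factorial : ℕ) := by
      rw [Nat.factorial_succ]; push_cast; ring
    rw [hq, hN, hA]
    rw [div_sub_div _ _ hpn0 hk1, div_eq_div_iff (mul_ne_zero hpn0 hk1) hfact]
    push_cast
    push_cast at hcast hF
    linear_combination ((k : ℚ_[p]) + 1) * hcast - (p : ℚ_[p]) ^ n * (-1 : ℚ_[p]) ^ k * hF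
  -- norm of q
  have hv : (p - 1) * padicValNat p (k+1).factorial ≤ k + 1 := by
    rw [sub_one_mul_padicValNat_factorial]
    omega
  set v : ℕ := padicValNat p (k+1).factorial with hvdef
  have hnormfact : ‖(((k+1).factorial : ℕ) : ℚ_[p])‖ = (p : ℝ) ^ (-(v : ℤ)) := by
    rw [Padic.norm_eq_zpow_neg_valuation (by exact_mod_cast hfact), Padic.valuation_natCast]
  have hnormN : ‖(N : ℚ_[p])‖ ≤ (p : ℝ) ^ (-(n : ℤ)) :=
    (Padic.norm_int_le_pow_iff_dvd N n).mpr hdvd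
  have hq_norm : ‖q‖ ≤ (p : ℝ) ^ (-(n : ℝ)) * (p : ℝ) ^ (((k + 1 : ℕ) : ℝ) / ((p : ℝ) - 1)) := by
    rw [key, norm_div, hnormfact]
    have hp1 : (1 : ℝ) < p := by exact_mod_cast hp.one_lt
    have h1 : (p : ℝ) ^ (-(n : ℤ)) = (p : ℝ) ^ (-(n : ℝ)) := by
      rw [← Real.rpow_intCast]; push_cast; ring_nf
    have h2 : ((p : ℝ) ^ (-(v : ℤ)))⁻¹ = (p : ℝ) ^ ((v : ℤ) : ℝ) := by
      rw [← Real.rpow_intCast]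
      rw [← Real.rpow_neg (by positivity)]
      push_cast
      ring_nf
    rw [div_eq_mul_inv, h2]
    refine mul_le_mul (h1 ▸ hnormN) ?_ (by positivity) (by positivity)
    apply Real.rpow_le_rpow_of_exponent_le hp1.le
    rw [le_div_iff₀ (by linarith : (0:ℝ) < (p : ℝ) - 1)]
    have h2 : ((p - 1 : ℕ) : ℝ) = (p : ℝ) - 1 := by
      have := hp.two_le
      push_cast [Nat.cast_sub (by omega : 1 ≤ p)]
      ring
    push_cast
    calc (v : ℝ) * ((p : ℝ) - 1) = (((p - 1) * v : ℕ) : ℝ) := by push_cast [h2]; ring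
      _ ≤ ((k : ℝ) + 1) := by exact_mod_cast hv
  -- put it together
  have hL : (((p ^ n).choose (k + 1) : L) / (p : L) ^ n
      - (-1 : L) ^ (k + 1 - 1) / ((k + 1 : ℕ) : L)) = f q := by
    rw [hq]
    simp [map_sub, map_div₀, map_pow, map_natCast]
  calc ‖(((p ^ n).choose (k+1) : L) / (p : L) ^ n) * x ^ (k+1)
        - ((-1 : L) ^ (k + 1 - 1) / ((k+1 : ℕ) : L)) * x ^ (k+1)‖
      = ‖f q‖ * ‖x‖ ^ (k + 1) := by rw [← sub_mul, hL, norm_mul, norm_pow]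
    _ = ‖q‖ * ‖x‖ ^ (k + 1) := by rw [hf]
    _ ≤ ((p : ℝ) ^ (-(n : ℝ)) * (p : ℝ) ^ (((k + 1 : ℕ) : ℝ) / ((p : ℝ) - 1))) * ‖x‖ ^ (k + 1) :=
        mul_le_mul_of_nonneg_right hq_norm (by positivity)
    _ = (p : ℝ) ^ (-(n : ℝ)) * (p : ℝ) ^ (((k + 1 : ℕ) : ℝ) / ((p : ℝ) - 1)) * ‖x‖ ^ (k+1) := rfl
end

section
/- Multiplication by p is a surjective endomorphism of the O_K̄-module of Kähler differentials Ω = Ω_{O_K̄ / O_K}; consequently, multiplication by p^n is surjective on Ω for every n ≥ 1. (This is the surjectivity claim the paper uses, via the snake lemma, to produce the exact sequences 0 → Ω[p^n] → A/p^nA → O_K̄/p^nO_K̄ → 0 in its geometric interpretation of the period ring A₂; it holds because every element of O_K̄ admits a p-th root in O_K̄.) -/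
set_option synthInstance.maxHeartbeats 1000000
set_option maxHeartbeats 1000000

/-- **Multiplication by `p` is surjective on `Ω_{O_K̄ / O_K}`.**
Let `p` be a prime, `K` a finite extension of `ℚ_p` with valuation ring
`O_K = integralClosure ℤ_p K`, `K̄` an algebraic closure of `K`, and
`O_K̄ = integralClosure O_K K̄`.  Then multiplication by `p` is a surjective endomorphism of
the `O_K̄`-module of Kähler differentials `Ω = Ω_{O_K̄ / O_K}`; consequently multiplication by
`p^n` is surjective on `Ω` for every `n ≥ 1`. -/
theorem kaehlerDifferential_mul_prime_surjective
    (p : ℕ) [Fact p.Prime] (K Kbar : Type*) [Field K] [Field Kbar]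
    [Algebra ℚ_[p] K] [FiniteDimensional ℚ_[p] K]
    [Algebra K Kbar] [IsAlgClosure K Kbar]
    [Algebra ℤ_[p] K] [IsScalarTower ℤ_[p] ℚ_[p] K] :
    Function.Surjective
        (fun ω : KaehlerDifferential (integralClosure ℤ_[p] K)
            (integralClosure (integralClosure ℤ_[p] K) Kbar) => p • ω) ∧
      ∀ n : ℕ, 1 ≤ n →
        Function.Surjective
          (fun ω : KaehlerDifferential (integralClosure ℤ_[p] K)
              (integralClosure (integralClosure ℤ_[p] K) Kbar) => p ^ n • ω) := by
  haveI : IsAlgClosed Kbar := IsAlgClosure.isAlgClosed K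
  have hp : 0 < p := (Fact.out : p.Prime).pos
  set OK := integralClosure ℤ_[p] K
  set OKbar := integralClosure OK Kbar
  have hsurj : Function.Surjective
      (fun ω : KaehlerDifferential OK OKbar => p • ω) := by
    intro m
    have hm : m ∈ Submodule.span OKbar
        (Set.range (KaehlerDifferential.D OK OKbar)) := by
      rw [KaehlerDifferential.span_range_derivation]; exact Submodule.mem_top
    refine Submodule.span_induction (p := fun m _ => ∃ ω, p • ω = m)
      ?_ ⟨0, smul_zero _⟩ ?_ ?_ hm
    case refine_2 =>
      rintro x y _ _ ⟨ω₁, h₁⟩ ⟨ω₂, h₂⟩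
      exact ⟨ω₁ + ω₂, by rw [smul_add, h₁, h₂]⟩
    case refine_3 =>
      rintro r x _ ⟨ω, h⟩
      exact ⟨r • ω, by rw [← h]; exact (map_nsmul (DistribMulAction.toAddMonoidHom (KaehlerDifferential OK OKbar) r) p ω).symm⟩
    rintro x ⟨a, rfl⟩
    -- `a` has a `p`-th root in `OKbar`
    obtain ⟨z, hz⟩ := IsAlgClosed.exists_pow_nat_eq (a : Kbar) hp
    have hzint : IsIntegral OK z := IsIntegral.of_pow hp (hz ▸ a.2)
    set y : OKbar := ⟨z, hzint⟩
    have hy : y ^ p = a := by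
      ext; push_cast; exact hz
    refine ⟨y ^ (p - 1) • KaehlerDifferential.D OK OKbar y, ?_⟩
    rw [← hy, Derivation.leibniz_pow]
  refine ⟨hsurj, fun n _ => ?_⟩
  clear * - hsurj
  induction n with
  | zero => intro m; exact ⟨m, one_smul _ m⟩
  | succ n ih =>
    intro m
    obtain ⟨ω₁, h₁⟩ := hsurj m
    obtain ⟨ω₂, h₂⟩ := ih ω₁
    exact ⟨ω₂, by simp only [pow_succ', mul_smul, h₂, h₁]⟩
end

section
/- Assume in addition that C is an abelian category, that F is an exact covariant functor and that G is an exact contravariant functor. Then for every short exact sequence 0 → X₁ → X → X₂ → 0 in C, one has P_H(X₁) ⊆ P_H(X) and P_H(X₂) ⊆ P_H(X). (This is the inclusion P_H⟨X₁⟩ + P_H⟨X₂⟩ ⊆ P_H⟨X⟩ established in the paper's proof that for abelian C the period space of the subcategory generated by X equals P_H⟨X⟩.) -/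
open CategoryTheory CategoryTheory.Limits TensorProduct

noncomputable section

universe w v u

/-- The canonical evaluation map: an element `γ` of `B ⊗[L] Hom_L(M, L)` is regarded as a
`B`-linear functional on `B ⊗[L] M`, via `(b ⊗ φ)(b' ⊗ m) = b·b'·φ(m)`. -/
def dualEval (L B : Type u) [Field L] [CommRing B] [Algebra L B]
    (M : Type u) [AddCommGroup M] [Module L M] :
    (B ⊗[L] Module.Dual L M) →ₗ[B] ((B ⊗[L] M) →ₗ[B] B) :=
  LinearMap.liftBaseChange B
    (((LinearMap.liftBaseChangeEquiv B).toLinearMap.restrictScalars L).comp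
      (LinearMap.llcomp L M L B (Algebra.linearMap L B)))

variable (K L B : Type u) [Field K] [Field L] [CommRing B]
  [Algebra K B] [Algebra L B] [Algebra ℚ B]
variable (U : Subring B)
variable (C : Type v) [Category.{w} C] [Abelian C]

/-- A period pairing `H = (F, G)` for an additive functor `T : C ⥤ Mod^B_{K,L}` to the
realisation category.  The functor `T` is recorded through its two components
`T_K : C ⥤ Vect_K` and `T_L : C ⥤ Vect_L` (with finite-dimensional values) together with the
`B`-linear comparison isomorphisms `ϖ_X : T_K(X) ⊗_K B ≃ T_L(X) ⊗_L B`, natural in `X`.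
`F` assigns to each object `X` a `ℚ`-linear subspace of `T_K(X) ⊗_K B` and `G` a `U`-linear
subspace of `Hom_L(T_L(X), L) ⊗_L B`, naturally in `X`: `F(f)` is the restriction of
`T_K(f) ⊗ id_B` and `G(f)` is the restriction of `(T_L(f))^∨ ⊗ id_B`.  The subfield `U ⊆ B`
is an algebraic extension of `ℚ` inside `B`. -/
structure PeriodPairing where
  /-- the `K`-linear component of the realisation functor -/
  TK : C ⥤ ModuleCat.{u} K
  /-- the `L`-linear component of the realisation functor -/
  TL : C ⥤ ModuleCat.{u} L
  TK_additive : TK.Additive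
  TL_additive : TL.Additive
  finK : ∀ X : C, FiniteDimensional K (TK.obj X)
  finL : ∀ X : C, FiniteDimensional L (TL.obj X)
  /-- the `B`-linear comparison isomorphism `ϖ_X` -/
  ϖ : ∀ X : C, (B ⊗[K] TK.obj X) ≃ₗ[B] (B ⊗[L] TL.obj X)
  /-- `ϖ` is natural in `X` -/
  ϖ_natural : ∀ {X Y : C} (f : X ⟶ Y) (v : B ⊗[K] TK.obj X),
    ϖ Y (LinearMap.baseChange B (TK.map f).hom v) = LinearMap.baseChange B (TL.map f).hom (ϖ X v)
  /-- `U` is a subfield of `B` -/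
  Ufield : IsField U
  /-- `U` is algebraic over `ℚ` -/
  Ualg : ∀ u : U, IsAlgebraic ℚ (u : B)
  /-- `F(X)` is a `ℚ`-linear subspace of `T_K(X) ⊗_K B` -/
  F : ∀ X : C, AddSubgroup (B ⊗[K] TK.obj X)
  F_smul : ∀ (X : C) (q : ℚ) (v : B ⊗[K] TK.obj X), v ∈ F X → algebraMap ℚ B q • v ∈ F X
  /-- `T_K(f) ⊗ id_B` maps `F(X)` into `F(Y)`; `F(f)` is its restriction -/
  F_map : ∀ {X Y : C} (f : X ⟶ Y) (v : B ⊗[K] TK.obj X),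
    v ∈ F X → LinearMap.baseChange B (TK.map f).hom v ∈ F Y
  /-- `G(X)` is a `U`-linear subspace of `Hom_L(T_L(X), L) ⊗_L B` -/
  G : ∀ X : C, AddSubgroup (B ⊗[L] Module.Dual L (TL.obj X))
  G_smul : ∀ (X : C) (u : U) (γ : B ⊗[L] Module.Dual L (TL.obj X)), γ ∈ G X → (u : B) • γ ∈ G X
  /-- `(T_L(f))^∨ ⊗ id_B` maps `G(Y)` into `G(X)`; `G(f)` is its restriction -/
  G_map : ∀ {X Y : C} (f : X ⟶ Y) (γ : B ⊗[L] Module.Dual L (TL.obj Y)),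
    γ ∈ G Y → LinearMap.baseChange B (LinearMap.dualMap (TL.map f).hom) γ ∈ G X

variable {K L B U C}

/-- The period pairing `⟨ν, γ⟩_H := γ(ϖ_X(ν)) ∈ B`. -/
def PeriodPairing.pair (P : PeriodPairing K L B U C) (X : C)
    (ν : B ⊗[K] P.TK.obj X) (γ : B ⊗[L] Module.Dual L (P.TL.obj X)) : B :=
  dualEval L B (P.TL.obj X) γ (P.ϖ X ν)

/-- The set `P_H(X) = { ⟨ν, γ⟩_H : ν ∈ F(X), γ ∈ G(X) }` of `H`-periods of `X`. -/
def PeriodPairing.periods (P : PeriodPairing K L B U C) (X : C) : Set B :=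
  {b : B | ∃ ν ∈ P.F X, ∃ γ ∈ P.G X, P.pair X ν γ = b}


lemma dualEval_dualMap {L B : Type u} [Field L] [CommRing B] [Algebra L B]
    {M N : Type u} [AddCommGroup M] [Module L M] [AddCommGroup N] [Module L N]
    (f : M →ₗ[L] N) (γ : B ⊗[L] Module.Dual L N) (m : B ⊗[L] M) :
    dualEval L B M (LinearMap.baseChange B f.dualMap γ) m
      = dualEval L B N γ (LinearMap.baseChange B f m) := by
  induction γ with
  | zero => simp
  | add x y hx hy => simp [hx, hy]
  | tmul b φ =>
    induction m with
    | zero => simp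
    | add x y hx hy =>
      simp only [LinearMap.baseChange_tmul] at hx hy
      simp [hx, hy]
    | tmul b' v => simp [dualEval, mul_comm]

/-- **Periods of sub- and quotient objects.**
Assume `C` is an abelian category, `F` is an exact covariant functor and `G` is an exact
contravariant functor (each carries every short exact sequence `0 → X₁ → X₂ → X₃ → 0` of `C`
to a short exact sequence of `ℚ`-vector spaces, resp. of `U`-vector spaces with arrows
reversed).  Then for every short exact sequence `0 → X₁ → X₂ → X₃ → 0` in `C` one has
`P_H(X₁) ⊆ P_H(X₂)` and `P_H(X₃) ⊆ P_H(X₂)`. -/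
theorem PeriodPairing.periods_of_shortExact
    [CharZero K] [CharZero L] [Nontrivial B]
    (P : PeriodPairing K L B U C)
    (hF : ∀ S : ShortComplex C, S.ShortExact →
      (∀ v ∈ P.F S.X₁, LinearMap.baseChange B (P.TK.map S.f).hom v = 0 → v = 0) ∧
      (∀ v ∈ P.F S.X₂, LinearMap.baseChange B (P.TK.map S.g).hom v = 0 →
        ∃ v₁ ∈ P.F S.X₁, LinearMap.baseChange B (P.TK.map S.f).hom v₁ = v) ∧
      (∀ w ∈ P.F S.X₃, ∃ v ∈ P.F S.X₂, LinearMap.baseChange B (P.TK.map S.g).hom v = w))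
    (hG : ∀ S : ShortComplex C, S.ShortExact →
      (∀ γ ∈ P.G S.X₃, LinearMap.baseChange B (LinearMap.dualMap (P.TL.map S.g).hom) γ = 0 →
        γ = 0) ∧
      (∀ γ ∈ P.G S.X₂, LinearMap.baseChange B (LinearMap.dualMap (P.TL.map S.f).hom) γ = 0 →
        ∃ γ₃ ∈ P.G S.X₃, LinearMap.baseChange B (LinearMap.dualMap (P.TL.map S.g).hom) γ₃ = γ) ∧
      (∀ δ ∈ P.G S.X₁, ∃ γ ∈ P.G S.X₂,
        LinearMap.baseChange B (LinearMap.dualMap (P.TL.map S.f).hom) γ = δ))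
    (S : ShortComplex C) (hS : S.ShortExact) :
    P.periods S.X₁ ⊆ P.periods S.X₂ ∧ P.periods S.X₃ ⊆ P.periods S.X₂ := by
  have key : ∀ {X Y : C} (f : X ⟶ Y) (ν : B ⊗[K] P.TK.obj X)
      (γ : B ⊗[L] Module.Dual L (P.TL.obj Y)),
      P.pair X ν (LinearMap.baseChange B (LinearMap.dualMap (P.TL.map f).hom) γ)
        = P.pair Y (LinearMap.baseChange B (P.TK.map f).hom ν) γ := by
    intro X Y f ν γ
    unfold PeriodPairing.pair
    rw [P.ϖ_natural f ν]
    exact dualEval_dualMap (P.TL.map f).hom γ (P.ϖ X ν)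
  constructor
  · rintro b ⟨ν, hν, δ, hδ, rfl⟩
    obtain ⟨γ, hγ, hγδ⟩ := (hG S hS).2.2 δ hδ
    exact ⟨_, P.F_map S.f ν hν, γ, hγ, by rw [← key S.f ν γ, hγδ]⟩
  · rintro b ⟨ν, hν, γ, hγ, rfl⟩
    obtain ⟨v, hv, hvν⟩ := (hF S hS).2.2 ν hν
    exact ⟨v, hv, _, P.G_map S.g γ hγ, by rw [key S.g v γ, hvν]⟩
end
end
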